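/- The partial derivative of the standard bivariate normal CDF with respect to the correlation parameter equals the bivariate normal density: ∂Φ₂(μ,ν;ρ)/∂ρ = φ₂(μ,ν;ρ) = (1/(2π√(1-ρ²)))·exp(-(μ² - 2ρμν + ν²)/(2(1-ρ²))), for any ρ ∈ (-1,1). -/

import Mathlib

open MeasureTheory Real Set Filter
open scoped Topology

noncomputable def stdPdf (x : ℝ) : ℝ := (Real.sqrt (2 * Real.pi))⁻¹ * Real.exp (-(x ^ 2) / 2)

noncomputable def stdCdf (x : ℝ) : ℝ := ∫ v in Set.Iio x, stdPdf v

lemma stdPdf_nonneg (x : ℝ) : 0 ≤ stdPdf x := by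
  unfold stdPdf; positivity

lemma stdPdf_le (x : ℝ) : stdPdf x ≤ (Real.sqrt (2 * Real.pi))⁻¹ := by
  unfold stdPdf
  have h1 : Real.exp (-(x ^ 2) / 2) ≤ 1 := Real.exp_le_one_iff.2 (by nlinarith [sq_nonneg x])
  have h2 : (0:ℝ) ≤ (Real.sqrt (2 * Real.pi))⁻¹ := by positivity
  calc (Real.sqrt (2 * Real.pi))⁻¹ * Real.exp (-(x ^ 2) / 2)
      ≤ (Real.sqrt (2 * Real.pi))⁻¹ * 1 := by gcongr
    _ = _ := mul_one _

lemma stdPdf_cont : Continuous stdPdf := by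
  unfold stdPdf
  fun_prop

lemma stdPdf_integrable : Integrable stdPdf := by
  have h : Integrable (fun x : ℝ => Real.exp (-(2⁻¹:ℝ) * x ^ 2)) :=
    integrable_exp_neg_mul_sq (by norm_num)
  refine (h.const_mul (Real.sqrt (2 * Real.pi))⁻¹).congr ?_
  filter_upwards with x
  unfold stdPdf
  congr 1
  ring

lemma abs_mul_stdPdf_integrable : Integrable (fun v => |v| * stdPdf v) := by
  have h : Integrable (fun x : ℝ => x * Real.exp (-(2⁻¹:ℝ) * x ^ 2)) :=
    integrable_mul_exp_neg_mul_sq (by norm_num)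
  refine ((h.abs.const_mul (Real.sqrt (2 * Real.pi))⁻¹)).congr ?_
  filter_upwards with x
  unfold stdPdf
  rw [abs_mul, abs_of_pos (Real.exp_pos _)]
  have : -(2⁻¹:ℝ) * x ^ 2 = -(x ^ 2) / 2 := by ring
  rw [this]
  ring

lemma stdCdf_eq (x : ℝ) : stdCdf x = stdCdf 0 + ∫ t in (0:ℝ)..x, stdPdf t := by
  have h := intervalIntegral.integral_Iic_sub_Iic (μ := volume) (f := stdPdf) (a := 0) (b := x)
    stdPdf_integrable.integrableOn stdPdf_integrable.integrableOn
  unfold stdCdf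
  rw [← integral_Iic_eq_integral_Iio, ← integral_Iic_eq_integral_Iio]
  linarith

lemma stdCdf_hasDerivAt (x : ℝ) : HasDerivAt stdCdf (stdPdf x) x := by
  have h : HasDerivAt (fun u => ∫ t in (0:ℝ)..u, stdPdf t) (stdPdf x) x :=
    intervalIntegral.integral_hasDerivAt_right stdPdf_integrable.intervalIntegrable
      (stdPdf_cont.stronglyMeasurable.stronglyMeasurableAtFilter)
      stdPdf_cont.continuousAt
  have h2 := h.const_add (stdCdf 0)
  refine h2.congr_of_eventuallyEq ?_
  filter_upwards with u
  exact stdCdf_eq u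

lemma stdCdf_nonneg (x : ℝ) : 0 ≤ stdCdf x :=
  integral_nonneg fun v => stdPdf_nonneg v

lemma stdCdf_le (x : ℝ) : stdCdf x ≤ ∫ v, stdPdf v :=
  setIntegral_le_integral stdPdf_integrable (Eventually.of_forall fun v => stdPdf_nonneg v)

lemma stdCdf_cont : Continuous stdCdf :=
  continuous_iff_continuousAt.2 fun x => (stdCdf_hasDerivAt x).continuousAt

lemma pdf_prod (ρ ν v : ℝ) (h : 0 < 1 - ρ ^ 2) :
    stdPdf ((ν - ρ * v) / Real.sqrt (1 - ρ ^ 2)) * stdPdf v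
      = (2 * Real.pi)⁻¹ * Real.exp (-(v ^ 2 - 2 * ρ * v * ν + ν ^ 2) / (2 * (1 - ρ ^ 2))) := by
  have h2π : (0:ℝ) ≤ 2 * Real.pi := by positivity
  unfold stdPdf
  rw [mul_mul_mul_comm, ← Real.exp_add, ← mul_inv, Real.mul_self_sqrt h2π]
  congr 1
  rw [div_pow, Real.sq_sqrt h.le]
  field_simp
  ring

lemma G_hasDerivAt (ρ ν : ℝ) (h : 0 < 1 - ρ ^ 2) (v : ℝ) :
    HasDerivAt (fun w => (2 * Real.pi * Real.sqrt (1 - ρ ^ 2))⁻¹ *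
        Real.exp (-(w ^ 2 - 2 * ρ * w * ν + ν ^ 2) / (2 * (1 - ρ ^ 2))))
      ((ρ * ν - v) / ((1 - ρ ^ 2) * Real.sqrt (1 - ρ ^ 2)) *
        (stdPdf ((ν - ρ * v) / Real.sqrt (1 - ρ ^ 2)) * stdPdf v)) v := by
  have hS : 0 < Real.sqrt (1 - ρ ^ 2) := Real.sqrt_pos.2 h
  have hE : HasDerivAt (fun w : ℝ => -(w ^ 2 - 2 * ρ * w * ν + ν ^ 2) / (2 * (1 - ρ ^ 2)))
      ((ρ * ν - v) / (1 - ρ ^ 2)) v := by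
    have h1 := (((hasDerivAt_pow 2 v).neg.add
      ((hasDerivAt_id v).const_mul (2 * ρ * ν))).sub_const (ν ^ 2)).div_const (2 * (1 - ρ ^ 2))
    convert h1 using 1
    · rfl
    · rfl
    · funext w; simp only [id_eq, Pi.add_apply, Pi.neg_apply]; ring
    · push_cast
      field_simp
      ring
  have h2 := (hE.exp).const_mul (2 * Real.pi * Real.sqrt (1 - ρ ^ 2))⁻¹
  convert h2 using 1
  · rfl
  · rfl
  rw [pdf_prod ρ ν v h]
  have hS2 : Real.sqrt (1 - ρ ^ 2) ^ 2 = 1 - ρ ^ 2 := Real.sq_sqrt h.le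
  field_simp

lemma G_tendsto (ρ ν : ℝ) (h : 0 < 1 - ρ ^ 2) :
    Tendsto (fun w => (2 * Real.pi * Real.sqrt (1 - ρ ^ 2))⁻¹ *
        Real.exp (-(w ^ 2 - 2 * ρ * w * ν + ν ^ 2) / (2 * (1 - ρ ^ 2)))) atBot (𝓝 0) := by
  have hq : Tendsto (fun v : ℝ => (v - ρ * ν) ^ 2) atBot atTop := by
    have h1 : Tendsto (fun v : ℝ => v - ρ * ν) atBot atBot :=
      tendsto_atBot_add_const_right atBot (-(ρ * ν)) tendsto_id
    have h2 := (tendsto_pow_atTop (two_ne_zero)).comp (tendsto_abs_atBot_atTop.comp h1)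
    refine h2.congr fun v => ?_
    simp [Function.comp, sq_abs, sub_eq_add_neg]
  have hh : Tendsto (fun w : ℝ => -(w ^ 2 - 2 * ρ * w * ν + ν ^ 2) / (2 * (1 - ρ ^ 2)))
      atBot atBot := by
    have h2 : Tendsto (fun v : ℝ => -(((v - ρ * ν) ^ 2 + ν ^ 2 * (1 - ρ ^ 2)) / (2 * (1 - ρ ^ 2))))
        atBot atBot := by
      apply tendsto_neg_atTop_atBot.comp
      apply Tendsto.atTop_div_const (by positivity)
      exact tendsto_atTop_add_const_right _ _ hq
    refine h2.congr fun v => ?_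
    field_simp
    ring
  have := (Real.tendsto_exp_atBot.comp hh).const_mul (2 * Real.pi * Real.sqrt (1 - ρ ^ 2))⁻¹
  simpa using this

noncomputable def Phi2 (μ ν ρ : ℝ) : ℝ :=
  ∫ v in Set.Iio μ, stdCdf ((ν - ρ * v) / Real.sqrt (1 - ρ ^ 2)) * stdPdf v

noncomputable def phi2 (μ ν ρ : ℝ) : ℝ :=
  (2 * Real.pi * Real.sqrt (1 - ρ ^ 2))⁻¹ *
    Real.exp (-(μ ^ 2 - 2 * ρ * μ * ν + ν ^ 2) / (2 * (1 - ρ ^ 2)))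

theorem stmt1 (μ ν ρ : ℝ) (hρ : ρ ∈ Set.Ioo (-1 : ℝ) 1) :
    HasDerivAt (fun r => Phi2 μ ν r) (phi2 μ ν ρ) ρ := by
  obtain ⟨hρ1, hρ2⟩ := hρ
  have habs : |ρ| < 1 := abs_lt.2 ⟨hρ1, hρ2⟩
  have h1ρ : 0 < 1 - ρ ^ 2 := by nlinarith [sq_abs ρ, abs_nonneg ρ]
  set ε := (1 - |ρ|) / 2 with hεdef
  have hεpos : 0 < ε := by simp only [hεdef]; linarith
  set c := 1 - ((1 + |ρ|) / 2) ^ 2 with hcdef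
  have hcpos : 0 < c := by
    rw [hcdef]
    nlinarith [abs_nonneg ρ]
  have hball : ∀ r ∈ Metric.ball ρ ε, |r| ≤ (1 + |ρ|) / 2 ∧ c ≤ 1 - r ^ 2 := by
    intro r hr
    rw [Metric.mem_ball, Real.dist_eq] at hr
    have h1 : |r| ≤ (1 + |ρ|) / 2 := by
      have h2 := abs_sub_abs_le_abs_sub r ρ
      simp only [hεdef] at hr
      linarith
    refine ⟨h1, ?_⟩
    rw [hcdef]
    nlinarith [abs_nonneg r, sq_abs r, abs_nonneg ρ]
  have hballpos : ∀ r ∈ Metric.ball ρ ε, 0 < 1 - r ^ 2 := fun r hr =>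
    lt_of_lt_of_le hcpos (hball r hr).2
  set F' : ℝ → ℝ → ℝ := fun r v =>
    (r * ν - v) / ((1 - r ^ 2) * Real.sqrt (1 - r ^ 2)) *
      (stdPdf ((ν - r * v) / Real.sqrt (1 - r ^ 2)) * stdPdf v) with hF'def
  have hFcont : ∀ r : ℝ, Continuous fun v => stdCdf ((ν - r * v) / Real.sqrt (1 - r ^ 2)) * stdPdf v := by
    intro r
    exact (stdCdf_cont.comp ((continuous_const.sub (continuous_const.mul continuous_id)).div_const _)).mul stdPdf_cont
  have key := hasDerivAt_integral_of_dominated_loc_of_deriv_le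
    (μ := volume.restrict (Set.Iio μ)) (x₀ := ρ)
    (F := fun r v => stdCdf ((ν - r * v) / Real.sqrt (1 - r ^ 2)) * stdPdf v)
    (F' := F')
    (bound := fun v => (Real.sqrt (2 * Real.pi))⁻¹ / (c * Real.sqrt c) * ((|ν| + |v|) * stdPdf v))
    (Metric.ball_mem_nhds ρ hεpos)
    (Eventually.of_forall fun r => (hFcont r).aestronglyMeasurable)
    ?_ ?_ ?_ ?_ ?_
  · obtain ⟨hint', hderiv⟩ := key
    have hG := G_hasDerivAt ρ ν h1ρ
    have hint2 : IntegrableOn (F' ρ) (Set.Iic μ) := by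
      rw [IntegrableOn, ← MeasureTheory.restrict_Iio_eq_restrict_Iic]
      exact hint'
    have hcalc : (∫ v in Set.Iio μ, F' ρ v) = phi2 μ ν ρ := by
      rw [← integral_Iic_eq_integral_Iio]
      have h0 := integral_Iic_of_hasDerivAt_of_tendsto
        (f := fun w => (2 * Real.pi * Real.sqrt (1 - ρ ^ 2))⁻¹ *
          Real.exp (-(w ^ 2 - 2 * ρ * w * ν + ν ^ 2) / (2 * (1 - ρ ^ 2))))
        (f' := F' ρ) (a := μ) (m := 0)
        (hG μ).continuousAt.continuousWithinAt (fun x _ => hG x) hint2 (G_tendsto ρ ν h1ρ)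
      rw [h0, sub_zero]
      rfl
    rw [← hcalc]
    exact hderiv
  · refine Integrable.mono' (((stdPdf_integrable.const_mul (∫ v, stdPdf v))).integrableOn)
      ((hFcont ρ).aestronglyMeasurable) ?_
    filter_upwards with v
    rw [Real.norm_eq_abs, abs_mul, abs_of_nonneg (stdCdf_nonneg _), abs_of_nonneg (stdPdf_nonneg _)]
    exact mul_le_mul_of_nonneg_right (stdCdf_le _) (stdPdf_nonneg v)
  · have : Continuous (F' ρ) := by
      simp only [hF'def]
      exact ((continuous_const.sub continuous_id).div_const _).mul
        ((stdPdf_cont.comp ((continuous_const.sub (continuous_const.mul continuous_id)).div_const _)).mul stdPdf_cont)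
    exact this.aestronglyMeasurable
  · filter_upwards with v
    intro r hr
    obtain ⟨hr1, hr2⟩ := hball r hr
    have h1r : 0 < 1 - r ^ 2 := hballpos r hr
    have hSr : 0 < Real.sqrt (1 - r ^ 2) := Real.sqrt_pos.2 h1r
    have hsc : 0 < Real.sqrt c := Real.sqrt_pos.2 hcpos
    have hnorm : ‖F' r v‖ = |r * ν - v| / ((1 - r ^ 2) * Real.sqrt (1 - r ^ 2)) *
        (stdPdf ((ν - r * v) / Real.sqrt (1 - r ^ 2)) * stdPdf v) := by
      simp only [hF'def]
      rw [Real.norm_eq_abs, abs_mul, abs_div,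
        abs_of_pos (by positivity : (0:ℝ) < (1 - r ^ 2) * Real.sqrt (1 - r ^ 2)),
        abs_of_nonneg (mul_nonneg (stdPdf_nonneg _) (stdPdf_nonneg _))]
    rw [hnorm]
    have hb1 : |r * ν - v| ≤ |ν| + |v| := by
      calc |r * ν - v| ≤ |r * ν| + |v| := abs_sub _ _
        _ = |r| * |ν| + |v| := by rw [abs_mul]
        _ ≤ 1 * |ν| + |v| := by
            have : |r| ≤ 1 := le_trans hr1 (by linarith)
            nlinarith [abs_nonneg ν]
        _ = |ν| + |v| := by ring
    calc |r * ν - v| / ((1 - r ^ 2) * Real.sqrt (1 - r ^ 2)) *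
        (stdPdf ((ν - r * v) / Real.sqrt (1 - r ^ 2)) * stdPdf v)
        ≤ (|ν| + |v|) / (c * Real.sqrt c) * ((Real.sqrt (2 * Real.pi))⁻¹ * stdPdf v) := by
          refine mul_le_mul ?_ ?_ (mul_nonneg (stdPdf_nonneg _) (stdPdf_nonneg _))
            (div_nonneg (by positivity) (mul_nonneg hcpos.le hsc.le))
          · exact div_le_div₀ (by positivity) hb1 (by positivity)
              (mul_le_mul hr2 (Real.sqrt_le_sqrt hr2) hsc.le h1r.le)
          · exact mul_le_mul_of_nonneg_right (stdPdf_le _) (stdPdf_nonneg v)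
      _ = (Real.sqrt (2 * Real.pi))⁻¹ / (c * Real.sqrt c) * ((|ν| + |v|) * stdPdf v) := by ring
  · refine (Integrable.integrableOn ?_)
    have h1 : Integrable (fun v : ℝ => |ν| * stdPdf v + |v| * stdPdf v) :=
      (stdPdf_integrable.const_mul |ν|).add abs_mul_stdPdf_integrable
    refine (h1.const_mul ((Real.sqrt (2 * Real.pi))⁻¹ / (c * Real.sqrt c))).congr ?_
    filter_upwards with v
    ring
  · filter_upwards with v
    intro r hr
    have h1r : 0 < 1 - r ^ 2 := hballpos r hr
    have hSr : 0 < Real.sqrt (1 - r ^ 2) := Real.sqrt_pos.2 h1r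
    have hSr2 : Real.sqrt (1 - r ^ 2) ^ 2 = 1 - r ^ 2 := Real.sq_sqrt h1r.le
    have hpow : HasDerivAt (fun r : ℝ => 1 - r ^ 2) (-(↑2 * r ^ 1)) r :=
      (hasDerivAt_pow 2 r).const_sub 1
    have hden : HasDerivAt (fun r : ℝ => Real.sqrt (1 - r ^ 2))
        (-(↑2 * r ^ 1) / (2 * Real.sqrt (1 - r ^ 2))) r := hpow.sqrt h1r.ne'
    have hnum : HasDerivAt (fun r : ℝ => ν - r * v) (-v) r :=
      (hasDerivAt_mul_const v).const_sub ν
    have hu : HasDerivAt (fun r : ℝ => (ν - r * v) / Real.sqrt (1 - r ^ 2))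
        ((-v * Real.sqrt (1 - r ^ 2) - (ν - r * v) * (-(↑2 * r ^ 1) / (2 * Real.sqrt (1 - r ^ 2)))) /
          Real.sqrt (1 - r ^ 2) ^ 2) r := hnum.div hden hSr.ne'
    have hcomp := ((stdCdf_hasDerivAt ((ν - r * v) / Real.sqrt (1 - r ^ 2))).comp r hu).mul_const (stdPdf v)
    convert hcomp using 1
    · rfl
    · rfl
    simp only [hF'def]
    set S := Real.sqrt (1 - r ^ 2) with hSdef
    rw [eq_comm, ← hSr2]
    push_cast
    set P := stdPdf ((ν - r * v) / S) with hP
    set Q := stdPdf v with hQ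
    field_simp
    linear_combination (-(P * v * Q)) * hSr2
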